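/- arXiv:1505.06182 — 6 statements merged into one kernel-verified Lean document; each statement's English description precedes it below -/
import Mathlib

section
/- Hermitian symmetry of the quaternion covariance matrix (pointwise identity): let μ1, μ2 be orthogonal pure unit quaternions and μ3 := μ1·μ2. Then for every q ∈ ℍ, (−μ1·q·μ1)·star(−μ2·q·μ2) = −μ1·(q·star(−μ3·q·μ3))·μ1, i.e. q^{μ1}·star(q^{μ2}) = (q·star(q^{μ3}))^{μ1}; consequently γ_{μ1 μ2} = (γ_{1 μ3})^{μ1} for any square-integrable quaternion random variable. -/
open Quaternion MeasureTheory

/-- Equip the quaternions with their Borel σ-algebra. -/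
noncomputable instance : MeasurableSpace ℍ[ℝ] := borel ℍ[ℝ]
instance : BorelSpace ℍ[ℝ] := ⟨rfl⟩

lemma pure_star_eq_neg (μ : ℍ[ℝ]) (hre : μ.re = 0) : star μ = -μ := by
  ext <;> simp [hre]

lemma pure_unit_sq (μ : ℍ[ℝ]) (hre : μ.re = 0) (h : ‖μ‖ = 1) : μ * μ = -1 := by
  have hs : star μ = -μ := pure_star_eq_neg μ hre
  have h2 : μ * star μ = ((normSq μ : ℝ) : ℍ[ℝ]) := Quaternion.self_mul_star μ
  rw [hs, Quaternion.normSq_eq_norm_mul_self, h, mul_one, mul_neg] at h2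
  exact neg_eq_iff_eq_neg.mp h2

set_option maxHeartbeats 1000000 in
/-- Hermitian symmetry of the quaternion covariance matrix: pointwise,
`q^{μ1}·star(q^{μ2}) = (q·star(q^{μ3}))^{μ1}` where `μ3 = μ1·μ2`, and hence
`γ_{μ1 μ2} = (γ_{1 μ3})^{μ1}` for any square-integrable quaternion random variable. -/
theorem covariance_hermitian_symmetry
    {Ω : Type*} [MeasurableSpace Ω] (P : Measure Ω) [IsProbabilityMeasure P]
    (μ1 μ2 : ℍ[ℝ]) (h1re : μ1.re = 0) (h1 : ‖μ1‖ = 1)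
    (h2re : μ2.re = 0) (h2 : ‖μ2‖ = 1) (horth : (μ1 * μ2).re = 0)
    (μ3 : ℍ[ℝ]) (hμ3 : μ3 = μ1 * μ2)
    (Q : Ω → ℍ[ℝ]) (hQmeas : Measurable Q) (hQ : MemLp Q 2 P) :
    (∀ q : ℍ[ℝ],
      (-μ1 * q * μ1) * star (-μ2 * q * μ2) = -μ1 * (q * star (-μ3 * q * μ3)) * μ1) ∧
    (∫ ω, (-μ1 * Q ω * μ1) * star (-μ2 * Q ω * μ2) ∂P)
        = -μ1 * (∫ ω, Q ω * star (-μ3 * Q ω * μ3) ∂P) * μ1 := by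
  have hs1 : star μ1 = -μ1 := pure_star_eq_neg μ1 h1re
  have hs2 : star μ2 = -μ2 := pure_star_eq_neg μ2 h2re
  have hs3 : star μ3 = -μ3 := by
    rw [hμ3]; exact pure_star_eq_neg _ horth
  have hA : μ1 * μ1 = -1 := pure_unit_sq μ1 h1re h1
  -- anticommutativity: μ2 * μ1 = -(μ1 * μ2)
  have hB : μ2 * μ1 = -(μ1 * μ2) := by
    have := pure_star_eq_neg (μ1 * μ2) horth
    rw [star_mul, hs1, hs2] at this
    simpa using this
  have hB' : μ1 * μ2 = -(μ2 * μ1) := by rw [hB, neg_neg]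
  have hB2 : μ1 * μ2 * μ1 = μ2 := by
    rw [hB', neg_mul, mul_assoc, hA]
    simp
  have key : ∀ q : ℍ[ℝ],
      (-μ1 * q * μ1) * star (-μ2 * q * μ2) = -μ1 * (q * star (-μ3 * q * μ3)) * μ1 := by
    intro q
    have e2 : star (-μ2 * q * μ2) = -(μ2 * star q * μ2) := by
      simp only [star_mul, star_neg, hs2]
      noncomm_ring
    have e3 : star (-μ3 * q * μ3) = -(μ3 * star q * μ3) := by
      simp only [star_mul, star_neg, hs3]
      noncomm_ring
    rw [e2, e3, hμ3]
    calc -μ1 * q * μ1 * -(μ2 * star q * μ2)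
        = μ1 * (q * (μ1 * μ2 * (star q * μ2))) := by noncomm_ring
      _ = μ1 * (q * (μ1 * μ2 * (star q * (μ1 * μ2 * μ1)))) := by rw [hB2]
      _ = -μ1 * (q * -(μ1 * μ2 * star q * (μ1 * μ2))) * μ1 := by noncomm_ring
  refine ⟨key, ?_⟩
  have hnormμ3 : ‖μ3‖ = 1 := by
    rw [hμ3, norm_mul, h1, h2, mul_one]
  have hg : MemLp (fun ω => star (-μ3 * Q ω * μ3)) 2 P := by
    have hfun : (fun ω => star (-μ3 * Q ω * μ3)) = fun ω => -μ3 * star (Q ω) * μ3 := by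
      funext ω
      simp only [star_mul, star_neg, hs3]
      noncomm_ring
    rw [hfun]
    refine MemLp.of_le hQ ?_ ?_
    · exact ((continuous_const.mul (continuous_star.comp continuous_id)).mul
        continuous_const).comp_aestronglyMeasurable hQ.1
    · filter_upwards with ω
      refine le_of_eq ?_
      calc ‖-μ3 * star (Q ω) * μ3‖ = ‖μ3‖ * ‖star (Q ω)‖ * ‖μ3‖ := by
            rw [norm_mul, norm_mul, norm_neg]
        _ = ‖Q ω‖ := by rw [Quaternion.norm_star, hnormμ3]; ring
  have hint : Integrable (fun ω => Q ω * star (-μ3 * Q ω * μ3)) P := by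
    rw [← memLp_one_iff_integrable]
    exact hg.smul (φ := Q) hQ (p := 2) (q := 2) (r := 1)
      (hpqr := ⟨by simp [one_div, ENNReal.inv_two_add_inv_two]⟩)
  calc (∫ ω, (-μ1 * Q ω * μ1) * star (-μ2 * Q ω * μ2) ∂P)
      = ∫ ω, (ContinuousLinearMap.mulLeftRight ℝ ℍ[ℝ] (-μ1) μ1)
          (Q ω * star (-μ3 * Q ω * μ3)) ∂P := by
        refine integral_congr_ae (Filter.Eventually.of_forall fun ω => ?_)
        simp only [ContinuousLinearMap.mulLeftRight_apply]
        exact key (Q ω)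
    _ = (ContinuousLinearMap.mulLeftRight ℝ ℍ[ℝ] (-μ1) μ1)
          (∫ ω, Q ω * star (-μ3 * Q ω * μ3) ∂P) :=
        ContinuousLinearMap.integral_comp_comm _ hint
    _ = -μ1 * (∫ ω, Q ω * star (-μ3 * Q ω * μ3) ∂P) * μ1 := by
        rw [ContinuousLinearMap.mulLeftRight_apply]
end

section
/- Covariance symmetries of a (μ1, μ2)-proper variable: let μ1, μ2 be orthogonal pure unit quaternions, μ3 := μ1μ2, and let Q be a square-integrable quaternion random variable on a probability space (Ω, P) whose law is invariant under q ↦ μ1·q·μ2 (i.e. the law of ω ↦ μ1·Q(ω)·μ2 equals the law of Q). Define γ_ν := E[Q·star(−ν·Q·ν)] ∈ ℍ for ν ∈ {μ1, μ2, μ3} (Bochner integral). Then γ_{μ1} = −(γ_{μ1})^{μ1}, γ_{μ2} = −(γ_{μ2})^{μ1}, and γ_{μ3} = (γ_{μ3})^{μ1}; equivalently γ_{μ1} = μ1·γ_{μ1}·μ1, γ_{μ2} = μ1·γ_{μ2}·μ1, and γ_{μ3} = −μ1·γ_{μ3}·μ1. -/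
open Quaternion MeasureTheory

set_option maxHeartbeats 1600000 in
/-- Covariance symmetries of a `(μ1, μ2)`-proper quaternion random variable:
with `γ_ν = E[Q·star(−ν·Q·ν)]`, one has `γ_{μ1} = −(γ_{μ1})^{μ1} = μ1·γ_{μ1}·μ1`,
`γ_{μ2} = −(γ_{μ2})^{μ1} = μ1·γ_{μ2}·μ1` and `γ_{μ3} = (γ_{μ3})^{μ1} = −μ1·γ_{μ3}·μ1`. -/
theorem covariance_symmetries_of_mu1_mu2_proper
    {Ω : Type*} [MeasurableSpace Ω] (P : Measure Ω) [IsProbabilityMeasure P]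
    (μ1 μ2 : ℍ[ℝ]) (h1re : μ1.re = 0) (h1 : ‖μ1‖ = 1)
    (h2re : μ2.re = 0) (h2 : ‖μ2‖ = 1) (horth : (μ1 * μ2).re = 0)
    (μ3 : ℍ[ℝ]) (hμ3 : μ3 = μ1 * μ2)
    (Q : Ω → ℍ[ℝ]) (hQmeas : Measurable Q) (hQ : MemLp Q 2 P)
    (hprop : Measure.map (fun ω => μ1 * Q ω * μ2) P = Measure.map Q P)
    (γ : ℍ[ℝ] → ℍ[ℝ]) (hγ : ∀ ν : ℍ[ℝ], γ ν = ∫ ω, Q ω * star (-ν * Q ω * ν) ∂P) :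
    γ μ1 = μ1 * γ μ1 * μ1 ∧
    γ μ2 = μ1 * γ μ2 * μ1 ∧
    γ μ3 = -(μ1 * γ μ3 * μ1) := by
  -- basic algebraic facts
  have hst1 : star μ1 = -μ1 := by ext <;> simp [h1re]
  have hst2 : star μ2 = -μ2 := by ext <;> simp [h2re]
  have hsq : ∀ μ : ℍ[ℝ], μ.re = 0 → ‖μ‖ = 1 → μ * μ = -1 := by
    intro μ hre hn
    have hst : star μ = -μ := by ext <;> simp [hre]
    have h := Quaternion.self_mul_star μ
    rw [hst, mul_neg] at h
    have hn1 : (Quaternion.normSq μ : ℝ) = 1 := by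
      rw [Quaternion.normSq_eq_norm_mul_self, hn]; ring
    rw [hn1] at h
    have : -(μ * μ) = 1 := by simpa using h
    exact neg_eq_iff_eq_neg.mp this
  have hsq1 : μ1 * μ1 = -1 := hsq μ1 h1re h1
  have hsq2 : μ2 * μ2 = -1 := hsq μ2 h2re h2
  have hanti : μ2 * μ1 = -(μ1 * μ2) := by
    have h := Quaternion.self_add_star (μ1 * μ2)
    rw [star_mul, hst1, hst2, horth] at h
    have h' : μ1 * μ2 + μ2 * μ1 = 0 := by
      simpa using h
    exact eq_neg_of_add_eq_zero_right h'
  have h11 : ∀ x : ℍ[ℝ], μ1 * (μ1 * x) = -x := by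
    intro x; rw [← mul_assoc, hsq1, neg_one_mul]
  have h22 : ∀ x : ℍ[ℝ], μ2 * (μ2 * x) = -x := by
    intro x; rw [← mul_assoc, hsq2, neg_one_mul]
  have h21 : ∀ x : ℍ[ℝ], μ2 * (μ1 * x) = -(μ1 * (μ2 * x)) := by
    intro x; rw [← mul_assoc, hanti, neg_mul, mul_assoc]
  -- the integrand as a function of q
  set f : ℍ[ℝ] → ℍ[ℝ] → ℍ[ℝ] := fun ν q => q * star (-ν * q * ν) with hf
  have hc : ∀ ν : ℍ[ℝ], Continuous fun q : ℍ[ℝ] => -ν * q * ν :=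
    fun ν => (continuous_const.mul continuous_id).mul continuous_const
  have hfcont : ∀ ν, Continuous (f ν) :=
    fun ν => continuous_id.mul (continuous_star.comp (hc ν))
  -- integrability of the integrand composed with Q
  have hint : ∀ ν : ℍ[ℝ], Integrable (fun ω => f ν (Q ω)) P := by
    intro ν
    have hg : MemLp (fun ω => star (-ν * Q ω * ν)) 2 P := by
      have hmeas : AEStronglyMeasurable (fun ω => star (-ν * Q ω * ν)) P :=
        (((continuous_star.comp (hc ν)).measurable).comp hQmeas).aestronglyMeasurable
      have hbig : MemLp ((‖ν‖ * ‖ν‖) • Q) 2 P := hQ.const_smul _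
      refine hbig.of_le hmeas ?_
      filter_upwards with ω
      simp only [Pi.smul_apply]
      have : ‖star (-ν * Q ω * ν)‖ = ‖ν‖ * ‖Q ω‖ * ‖ν‖ := by
        rw [norm_star]
        rw [norm_mul, norm_mul, norm_neg]
      rw [this, norm_smul]
      simp [norm_mul, abs_of_nonneg (mul_nonneg (norm_nonneg ν) (norm_nonneg ν)),
        mul_comm, mul_left_comm, mul_assoc, le_refl]
    have hexp : (1 : ENNReal) / 1 = 1 / 2 + 1 / 2 := by
      norm_num [ENNReal.inv_two_add_inv_two]
    have hmul := hg.smul (φ := Q) hQ (p := 2) (q := 2) (r := 1)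
      (hpqr := ⟨by rw [inv_one]; exact ENNReal.inv_two_add_inv_two⟩)
    rw [← memLp_one_iff_integrable]
    have : (Q • fun ω => star (-ν * Q ω * ν)) = fun ω => f ν (Q ω) := by
      funext ω; simp [hf, smul_eq_mul]
    rwa [this] at hmul
  -- the change-of-variables identity
  have hchange : ∀ ν : ℍ[ℝ],
      (∫ ω, f ν (Q ω) ∂P) = ∫ ω, f ν (μ1 * Q ω * μ2) ∂P := by
    intro ν
    have hmeas2 : Measurable fun ω => μ1 * Q ω * μ2 :=
      (hQmeas.const_mul μ1).mul_const μ2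
    have hsm : AEStronglyMeasurable (f ν) (Measure.map Q P) :=
      (hfcont ν).aestronglyMeasurable
    rw [← integral_map hQmeas.aemeasurable hsm, ← hprop,
      integral_map hmeas2.aemeasurable]
    rw [← hprop] at hsm
    exact hsm
  refine ⟨?_, ?_, ?_⟩
  · -- ν = μ1
    have key : ∀ q : ℍ[ℝ], f μ1 (μ1 * q * μ2) = μ1 * f μ1 q * μ1 := by
      intro q
      simp only [hf, star_neg, star_mul, hst1, hst2, neg_mul, mul_neg, neg_neg, mul_assoc,
        h11, h22, h21, hsq1, hsq2, hanti, mul_neg_one, mul_one]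
    let L : ℍ[ℝ] →L[ℝ] ℍ[ℝ] :=
      LinearMap.toContinuousLinearMap
        ((LinearMap.mulRight ℝ μ1).comp (LinearMap.mulLeft ℝ μ1))
    have hL : ∀ x, L x = μ1 * x * μ1 := fun x => rfl
    calc γ μ1 = ∫ ω, f μ1 (Q ω) ∂P := hγ μ1
      _ = ∫ ω, f μ1 (μ1 * Q ω * μ2) ∂P := hchange μ1
      _ = ∫ ω, μ1 * f μ1 (Q ω) * μ1 ∂P := by simp only [key]
      _ = ∫ ω, L (f μ1 (Q ω)) ∂P := by simp only [hL]
      _ = L (∫ ω, f μ1 (Q ω) ∂P) := L.integral_comp_comm (hint μ1)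
      _ = μ1 * γ μ1 * μ1 := by rw [hL, hγ μ1]
  · -- ν = μ2
    have key : ∀ q : ℍ[ℝ], f μ2 (μ1 * q * μ2) = μ1 * f μ2 q * μ1 := by
      intro q
      simp only [hf, star_neg, star_mul, hst1, hst2, neg_mul, mul_neg, neg_neg, mul_assoc,
        h11, h22, h21, hsq1, hsq2, hanti, mul_neg_one, mul_one]
    let L : ℍ[ℝ] →L[ℝ] ℍ[ℝ] :=
      LinearMap.toContinuousLinearMap
        ((LinearMap.mulRight ℝ μ1).comp (LinearMap.mulLeft ℝ μ1))
    have hL : ∀ x, L x = μ1 * x * μ1 := fun x => rfl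
    calc γ μ2 = ∫ ω, f μ2 (Q ω) ∂P := hγ μ2
      _ = ∫ ω, f μ2 (μ1 * Q ω * μ2) ∂P := hchange μ2
      _ = ∫ ω, μ1 * f μ2 (Q ω) * μ1 ∂P := by simp only [key]
      _ = ∫ ω, L (f μ2 (Q ω)) ∂P := by simp only [hL]
      _ = L (∫ ω, f μ2 (Q ω) ∂P) := L.integral_comp_comm (hint μ2)
      _ = μ1 * γ μ2 * μ1 := by rw [hL, hγ μ2]
  · -- ν = μ3
    have key : ∀ q : ℍ[ℝ], f μ3 (μ1 * q * μ2) = -(μ1 * f μ3 q * μ1) := by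
      intro q
      simp only [hf, hμ3, star_neg, star_mul, hst1, hst2, neg_mul, mul_neg, neg_neg, mul_assoc,
        h11, h22, h21, hsq1, hsq2, hanti, mul_neg_one, mul_one]
    let L : ℍ[ℝ] →L[ℝ] ℍ[ℝ] :=
      LinearMap.toContinuousLinearMap
        ((LinearMap.mulRight ℝ μ1).comp (LinearMap.mulLeft ℝ μ1))
    have hL : ∀ x, L x = μ1 * x * μ1 := fun x => rfl
    calc γ μ3 = ∫ ω, f μ3 (Q ω) ∂P := hγ μ3
      _ = ∫ ω, f μ3 (μ1 * Q ω * μ2) ∂P := hchange μ3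
      _ = ∫ ω, -(μ1 * f μ3 (Q ω) * μ1) ∂P := by simp only [key]
      _ = -∫ ω, L (f μ3 (Q ω)) ∂P := by rw [integral_neg]; simp only [hL]
      _ = -L (∫ ω, f μ3 (Q ω) ∂P) := by rw [L.integral_comp_comm (hint μ3)]
      _ = -(μ1 * γ μ3 * μ1) := by rw [hL, hγ μ3]
end

section
/- Second-order structure of a (μ1, μ2)-proper variable: let μ1, μ2 be orthogonal pure unit quaternions, and let Q be a square-integrable quaternion random variable on (Ω, P) whose law is invariant under q ↦ μ1·q·μ2. Let Z1 := (Q − μ1·Q·μ1)/2 and Z2 := −((Q + μ1·Q·μ1)/2)·μ2 be its Cayley–Dickson components, taking values in ℂ_{μ1} = span_ℝ{1, μ1}. Then: (i) E[|Z1|²] = E[|Z2|²]; (ii) E[Z1²] = −E[Z2²]; (iii) the cross-correlation E[Z1·star(Z2)] has vanishing real part, Re(E[Z1·star(Z2)]) = 0. -/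
open Quaternion MeasureTheory

/-- Quaternion conjugation as a real-linear isometry. -/
noncomputable def quatStarLI : ℍ[ℝ] →ₗᵢ[ℝ] ℍ[ℝ] where
  toFun := star
  map_add' := star_add
  map_smul' := fun r x => by simp [Quaternion.star_smul]
  norm_map' := Quaternion.norm_star

/-- Transport of integrals along equality of pushforward laws. -/
lemma integral_comp_eq_of_map_eq {Ω : Type*} [MeasurableSpace Ω] (P : Measure Ω)
    {E : Type*} [NormedAddCommGroup E] [NormedSpace ℝ E]
    {X Y : Ω → ℍ[ℝ]} (hX : AEMeasurable X P) (hY : AEMeasurable Y P)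
    (hmap : Measure.map X P = Measure.map Y P) (g : ℍ[ℝ] → E) (hg : Continuous g) :
    ∫ ω, g (X ω) ∂P = ∫ ω, g (Y ω) ∂P := by
  rw [← integral_map hX hg.aestronglyMeasurable, ← integral_map hY hg.aestronglyMeasurable, hmap]

/-- Second-order structure of a `(μ1, μ2)`-proper quaternion random variable:
its Cayley–Dickson components satisfy `E[|Z1|²] = E[|Z2|²]`, `E[Z1²] = −E[Z2²]`,
and `Re(E[Z1·star(Z2)]) = 0`. -/
theorem second_order_structure_mu1_mu2_proper
    {Ω : Type*} [MeasurableSpace Ω] (P : Measure Ω) [IsProbabilityMeasure P]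
    (μ1 μ2 : ℍ[ℝ]) (h1re : μ1.re = 0) (h1 : ‖μ1‖ = 1)
    (h2re : μ2.re = 0) (h2 : ‖μ2‖ = 1) (horth : (μ1 * μ2).re = 0)
    (Q : Ω → ℍ[ℝ]) (hQmeas : Measurable Q) (hQ : MemLp Q 2 P)
    (hprop : Measure.map (fun ω => μ1 * Q ω * μ2) P = Measure.map Q P)
    (Z1 Z2 : Ω → ℍ[ℝ])
    (hZ1 : ∀ ω, Z1 ω = (Q ω - μ1 * Q ω * μ1) / 2)
    (hZ2 : ∀ ω, Z2 ω = -((Q ω + μ1 * Q ω * μ1) / 2) * μ2) :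
    (∫ ω, ‖Z1 ω‖ ^ 2 ∂P) = (∫ ω, ‖Z2 ω‖ ^ 2 ∂P) ∧
    (∫ ω, Z1 ω ^ 2 ∂P) = -(∫ ω, Z2 ω ^ 2 ∂P) ∧
    (∫ ω, Z1 ω * star (Z2 ω) ∂P).re = 0 := by
  -- basic quaternion algebra facts
  have hs1 : star μ1 = -μ1 := QuaternionAlgebra.star_eq_neg.mpr h1re
  have hs2 : star μ2 = -μ2 := QuaternionAlgebra.star_eq_neg.mpr h2re
  have hn1 : μ1 * μ1 = -1 := by
    have h := Quaternion.self_mul_star μ1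
    rw [hs1, mul_neg, Quaternion.normSq_eq_norm_mul_self, h1] at h
    simpa [neg_eq_iff_eq_neg] using h
  have hn2 : μ2 * μ2 = -1 := by
    have h := Quaternion.self_mul_star μ2
    rw [hs2, mul_neg, Quaternion.normSq_eq_norm_mul_self, h2] at h
    simpa [neg_eq_iff_eq_neg] using h
  have hac : μ2 * μ1 = -(μ1 * μ2) := by
    have hsm : star (μ1 * μ2) = -(μ1 * μ2) := QuaternionAlgebra.star_eq_neg.mpr horth
    calc μ2 * μ1 = (-μ2) * (-μ1) := by noncomm_ring
      _ = star μ2 * star μ1 := by rw [hs1, hs2]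
      _ = star (μ1 * μ2) := (star_mul μ1 μ2).symm
      _ = -(μ1 * μ2) := hsm
  have hhalf : ∀ x : ℍ[ℝ], x / 2 = (2⁻¹ : ℝ) • x := by
    intro x
    have h2 : ((2 : ℝ) : ℍ[ℝ]) = (2 : ℍ[ℝ]) := by norm_cast
    rw [div_eq_mul_inv, ← h2, ← Quaternion.coe_inv, Quaternion.mul_coe_eq_smul]
  -- the Cayley–Dickson component maps
  set F1 : ℍ[ℝ] → ℍ[ℝ] := fun q => (q - μ1 * q * μ1) / 2 with hF1
  set F2 : ℍ[ℝ] → ℍ[ℝ] := fun q => -((q + μ1 * q * μ1) / 2) * μ2 with hF2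
  have hF1s : ∀ q, F1 q = (2⁻¹ : ℝ) • (q - μ1 * q * μ1) := fun q => hhalf _
  have hF2s : ∀ q, F2 q = (2⁻¹ : ℝ) • (-((q + μ1 * q * μ1) * μ2)) := by
    intro q
    show -((q + μ1 * q * μ1) / 2) * μ2 = _
    rw [hhalf, ← smul_neg, smul_mul_assoc, neg_mul]
  have hZ1' : ∀ ω, Z1 ω = F1 (Q ω) := hZ1
  have hZ2' : ∀ ω, Z2 ω = F2 (Q ω) := hZ2
  have hF1c : Continuous F1 := by
    rw [hF1]; fun_prop
  have hF2c : Continuous F2 := by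
    rw [hF2]; fun_prop
  -- key transformation identities
  have hA : ∀ q : ℍ[ℝ], F1 (μ1 * q * μ2) = -(μ1 * F2 q) := by
    intro q
    rw [hF1s, hF2s, mul_smul_comm, ← smul_neg]
    congr 1
    have e1 : μ1 * (μ1 * q * μ2) * μ1 = (μ1 * μ1) * (q * (μ2 * μ1)) := by noncomm_ring
    have e2 : μ1 * -((q + μ1 * q * μ1) * μ2)
        = -(μ1 * q * μ2 + ((μ1 * μ1) * (q * μ1)) * μ2) := by noncomm_ring
    rw [e1, e2, hn1, hac]
    noncomm_ring
  have hB : ∀ q : ℍ[ℝ], F2 (μ1 * q * μ2) = μ1 * F1 q := by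
    intro q
    rw [hF1s, hF2s, mul_smul_comm]
    congr 1
    have e1 : μ1 * (μ1 * q * μ2) * μ1 = (μ1 * μ1) * (q * (μ2 * μ1)) := by noncomm_ring
    have e2 : ∀ a b : ℍ[ℝ], -((a * μ2 + b * (μ1 * μ2)) * μ2)
        = -(a * (μ2 * μ2)) - b * μ1 * (μ2 * μ2) := by intro a b; noncomm_ring
    have e3 : μ1 * (q - μ1 * q * μ1) = μ1 * q - (μ1 * μ1) * (q * μ1) := by noncomm_ring
    rw [e1, hn1, hac, e3]
    have e4 : (-1 : ℍ[ℝ]) * (q * -(μ1 * μ2)) = q * (μ1 * μ2) := by noncomm_ring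
    rw [e4, e2, hn2, hn1]
    noncomm_ring
  -- commutation of the components with μ1
  have hc1 : ∀ q : ℍ[ℝ], μ1 * F1 q = F1 q * μ1 := by
    intro q
    rw [hF1s, mul_smul_comm, smul_mul_assoc]
    congr 1
    have e3 : μ1 * (q - μ1 * q * μ1) = μ1 * q - (μ1 * μ1) * (q * μ1) := by noncomm_ring
    have e4 : (q - μ1 * q * μ1) * μ1 = q * μ1 - (μ1 * q) * (μ1 * μ1) := by noncomm_ring
    rw [e3, e4, hn1]
    noncomm_ring
  have hc2 : ∀ q : ℍ[ℝ], μ1 * F2 q = F2 q * μ1 := by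
    intro q
    rw [hF2s, mul_smul_comm, smul_mul_assoc]
    congr 1
    have e3 : μ1 * -((q + μ1 * q * μ1) * μ2)
        = -((μ1 * q + (μ1 * μ1) * (q * μ1)) * μ2) := by noncomm_ring
    have e4 : -((q + μ1 * q * μ1) * μ2) * μ1
        = -(q * (μ2 * μ1)) - μ1 * q * μ1 * (μ2 * μ1) := by noncomm_ring
    rw [e3, hn1, e4, hac]
    have e5 : μ1 * q * μ1 * -(μ1 * μ2) = -((μ1 * q) * ((μ1 * μ1) * μ2)) := by noncomm_ring
    rw [e5, hn1]
    noncomm_ring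
  -- measurability of the transformed variable
  have hTcont : Continuous (fun q : ℍ[ℝ] => μ1 * q * μ2) := by fun_prop
  have hTmeas : Measurable (fun ω => μ1 * Q ω * μ2) :=
    (hTcont.measurable).comp hQmeas
  refine ⟨?_, ?_, ?_⟩
  · -- E[|Z1|²] = E[|Z2|²]
    calc (∫ ω, ‖Z1 ω‖ ^ 2 ∂P) = ∫ ω, ‖F1 (Q ω)‖ ^ 2 ∂P := by simp only [hZ1']
      _ = ∫ ω, ‖F1 (μ1 * Q ω * μ2)‖ ^ 2 ∂P :=
        (integral_comp_eq_of_map_eq P hTmeas.aemeasurable hQmeas.aemeasurable hprop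
          (fun q => ‖F1 q‖ ^ 2) (hF1c.norm.pow 2)).symm
      _ = ∫ ω, ‖-(μ1 * F2 (Q ω))‖ ^ 2 ∂P := by simp only [hA]
      _ = ∫ ω, ‖Z2 ω‖ ^ 2 ∂P := by simp only [norm_neg, norm_mul, h1, one_mul, hZ2']
  · -- E[Z1²] = -E[Z2²]
    have hsq : ∀ q : ℍ[ℝ], (-(μ1 * F2 q)) ^ 2 = -(F2 q ^ 2) := by
      intro q
      have e1 : (-(μ1 * F2 q)) ^ 2 = μ1 * (F2 q * μ1) * F2 q := by noncomm_ring
      rw [e1, ← hc2, show μ1 * (μ1 * F2 q) * F2 q = (μ1 * μ1) * (F2 q * F2 q) by noncomm_ring,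
        hn1]
      noncomm_ring
    calc (∫ ω, Z1 ω ^ 2 ∂P) = ∫ ω, F1 (Q ω) ^ 2 ∂P := by simp only [hZ1']
      _ = ∫ ω, F1 (μ1 * Q ω * μ2) ^ 2 ∂P :=
        (integral_comp_eq_of_map_eq P hTmeas.aemeasurable hQmeas.aemeasurable hprop
          (fun q => F1 q ^ 2) (hF1c.pow 2)).symm
      _ = ∫ ω, -(F2 (Q ω) ^ 2) ∂P := by simp only [hA, hsq]
      _ = -(∫ ω, Z2 ω ^ 2 ∂P) := by
        simp only [hZ2']; exact integral_neg _
  · -- Re E[Z1 ⋅ star Z2] = 0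
    have hstarcomm : ∀ x : ℍ[ℝ], μ1 * x = x * μ1 → μ1 * star x = star x * μ1 := by
      intro x hx
      have h' := congrArg star hx
      rw [star_mul, star_mul, hs1, mul_neg, neg_mul, neg_inj] at h'
      exact h'.symm
    have key : ∀ x1 x2 : ℍ[ℝ], μ1 * x1 = x1 * μ1 → μ1 * x2 = x2 * μ1 →
        -(μ1 * x2) * star (μ1 * x1) = -(star (x1 * star x2)) := by
      intro x1 x2 hx1 hx2
      have hsx1 := hstarcomm x1 hx1
      rw [star_mul μ1 x1, hs1, star_mul x1 (star x2), star_star, hx2]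
      have e : -(x2 * μ1) * (star x1 * -μ1) = x2 * (μ1 * star x1) * μ1 := by noncomm_ring
      rw [e, hsx1]
      have e2 : x2 * (star x1 * μ1) * μ1 = x2 * star x1 * (μ1 * μ1) := by noncomm_ring
      rw [e2, hn1]
      noncomm_ring
    have hcross : ∀ q : ℍ[ℝ],
        F1 (μ1 * q * μ2) * star (F2 (μ1 * q * μ2))
          = -(star (F1 q * star (F2 q))) := by
      intro q
      rw [hA, hB]
      exact key (F1 q) (F2 q) (hc1 q) (hc2 q)
    have hgc : Continuous (fun q : ℍ[ℝ] => F1 q * star (F2 q)) :=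
      hF1c.mul hF2c.star
    have hI : (∫ ω, Z1 ω * star (Z2 ω) ∂P)
        = -star (∫ ω, Z1 ω * star (Z2 ω) ∂P) := by
      calc (∫ ω, Z1 ω * star (Z2 ω) ∂P)
          = ∫ ω, F1 (Q ω) * star (F2 (Q ω)) ∂P := by simp only [hZ1', hZ2']
        _ = ∫ ω, F1 (μ1 * Q ω * μ2) * star (F2 (μ1 * Q ω * μ2)) ∂P :=
          (integral_comp_eq_of_map_eq P hTmeas.aemeasurable hQmeas.aemeasurable hprop
            (fun q => F1 q * star (F2 q)) hgc).symm
        _ = ∫ ω, -(star (F1 (Q ω) * star (F2 (Q ω)))) ∂P := by simp only [hcross]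
        _ = -∫ ω, star (F1 (Q ω) * star (F2 (Q ω))) ∂P := integral_neg _
        _ = -star (∫ ω, F1 (Q ω) * star (F2 (Q ω)) ∂P) := by
          rw [show (fun ω => star (F1 (Q ω) * star (F2 (Q ω))))
              = fun ω => quatStarLI (F1 (Q ω) * star (F2 (Q ω))) from rfl]
          rw [quatStarLI.integral_comp_comm]
          rfl
        _ = -star (∫ ω, Z1 ω * star (Z2 ω) ∂P) := by simp only [hZ1', hZ2']
    have hre := congrArg QuaternionAlgebra.re hI
    simp only [Quaternion.re_neg, Quaternion.re_star] at hre
    linarith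
end

section
/- Second-order structure of a (μ1, 1)-proper variable: let μ1, μ2 be orthogonal pure unit quaternions, and let Q be a square-integrable quaternion random variable on (Ω, P) whose law is invariant under left Clifford translation q ↦ μ1·q (i.e. the law of ω ↦ μ1·Q(ω) equals the law of Q). Let Z1 := (Q − μ1·Q·μ1)/2 and Z2 := −((Q + μ1·Q·μ1)/2)·μ2 be its Cayley–Dickson components, taking values in ℂ_{μ1} = span_ℝ{1, μ1}. Then Z1 and Z2 are proper complex variables that are not pseudo-correlated: E[Z1²] = 0, E[Z2²] = 0, and E[Z1·Z2] = 0. -/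
open Quaternion MeasureTheory

/-- Second-order structure of a `(μ1, 1)`-proper quaternion random variable
(invariant under the left Clifford translation `q ↦ μ1·q`): its Cayley–Dickson
components are proper and not pseudo-correlated:
`E[Z1²] = 0`, `E[Z2²] = 0` and `E[Z1·Z2] = 0`. -/
theorem second_order_structure_mu1_one_proper
    {Ω : Type*} [MeasurableSpace Ω] (P : Measure Ω) [IsProbabilityMeasure P]
    (μ1 μ2 : ℍ[ℝ]) (h1re : μ1.re = 0) (h1 : ‖μ1‖ = 1)
    (h2re : μ2.re = 0) (h2 : ‖μ2‖ = 1) (horth : (μ1 * μ2).re = 0)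
    (Q : Ω → ℍ[ℝ]) (hQmeas : Measurable Q) (hQ : MemLp Q 2 P)
    (hprop : Measure.map (fun ω => μ1 * Q ω) P = Measure.map Q P)
    (Z1 Z2 : Ω → ℍ[ℝ])
    (hZ1 : ∀ ω, Z1 ω = (Q ω - μ1 * Q ω * μ1) / 2)
    (hZ2 : ∀ ω, Z2 ω = -((Q ω + μ1 * Q ω * μ1) / 2) * μ2) :
    (∫ ω, Z1 ω ^ 2 ∂P) = 0 ∧
    (∫ ω, Z2 ω ^ 2 ∂P) = 0 ∧
    (∫ ω, Z1 ω * Z2 ω ∂P) = 0 := by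
  -- basic algebraic facts
  have hs1 : star μ1 = -μ1 := by simp [Quaternion.star_eq_two_re_sub, h1re]
  have hsq : μ1 * μ1 = -1 := by
    have hn : Quaternion.normSq μ1 = 1 := by rw [Quaternion.normSq_eq_norm_mul_self, h1]; ring
    have h := Quaternion.self_mul_star μ1
    rw [hs1, hn] at h
    simpa [mul_neg, neg_eq_iff_eq_neg] using h
  have hanti : μ2 * μ1 = -(μ1 * μ2) := by
    have hs2 : star μ2 = -μ2 := by simp [Quaternion.star_eq_two_re_sub, h2re]
    have h := Quaternion.self_add_star' (μ1 * μ2)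
    rw [horth, star_mul, hs1, hs2] at h
    simp only [neg_mul, mul_neg, neg_neg] at h
    norm_num at h
    exact eq_neg_of_add_eq_zero_right h
  -- numerators (no division)
  set N1 : ℍ[ℝ] → ℍ[ℝ] := fun q => q - μ1 * q * μ1 with hN1def
  set N2 : ℍ[ℝ] → ℍ[ℝ] := fun q => -(q + μ1 * q * μ1) * μ2 with hN2def
  -- equivariance under left translation
  have hEq1 : ∀ q, N1 (μ1 * q) = μ1 * N1 q := by intro q; simp only [hN1def]; noncomm_ring
  have hEq2 : ∀ q, N2 (μ1 * q) = μ1 * N2 q := by intro q; simp only [hN2def]; noncomm_ring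
  -- μ1 commutes with the components
  have hc1 : ∀ q, μ1 * N1 q = N1 q * μ1 := by
    intro q
    calc μ1 * N1 q = μ1 * q - (μ1 * μ1) * (q * μ1) := by simp only [hN1def]; noncomm_ring
      _ = μ1 * q - (-1) * (q * μ1) := by rw [hsq]
      _ = q * μ1 - (μ1 * q) * (-1) := by noncomm_ring
      _ = q * μ1 - (μ1 * q) * (μ1 * μ1) := by rw [hsq]
      _ = N1 q * μ1 := by simp only [hN1def]; noncomm_ring
  have hc2 : ∀ q, μ1 * N2 q = N2 q * μ1 := by
    intro q
    calc μ1 * N2 q = -(μ1 * q + (μ1 * μ1) * (q * μ1)) * μ2 := by simp only [hN2def]; noncomm_ring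
      _ = -(μ1 * q + (-1) * (q * μ1)) * μ2 := by rw [hsq]
      _ = (q * μ1 + (μ1 * q) * (-1)) * μ2 := by noncomm_ring
      _ = (q * μ1 + (μ1 * q) * (μ1 * μ1)) * μ2 := by rw [hsq]
      _ = -((q + μ1 * q * μ1) * (-(μ1 * μ2))) := by noncomm_ring
      _ = -((q + μ1 * q * μ1) * (μ2 * μ1)) := by rw [hanti]
      _ = N2 q * μ1 := by simp only [hN2def]; noncomm_ring
  -- change of variables
  have hmap : ∀ g : ℍ[ℝ] → ℍ[ℝ], Continuous g →
      ∫ ω, g (μ1 * Q ω) ∂P = ∫ ω, g (Q ω) ∂P := by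
    intro g hg
    have hm1 : Measurable fun ω => μ1 * Q ω :=
      ((continuous_const.mul continuous_id).measurable).comp hQmeas
    rw [← integral_map hm1.aemeasurable hg.aestronglyMeasurable, hprop,
      integral_map hQmeas.aemeasurable hg.aestronglyMeasurable]
  -- sign-flip principle
  have flip : ∀ g : ℍ[ℝ] → ℍ[ℝ], Continuous g → (∀ q, g (μ1 * q) = -(g q)) →
      (∫ ω, g (Q ω) ∂P) = 0 := by
    intro g hg hflip
    have h := hmap g hg
    simp_rw [hflip] at h
    rw [integral_neg] at h
    have h1 : (∫ ω, g (Q ω) ∂P) + (∫ ω, g (Q ω) ∂P) = 0 := by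
      nth_rewrite 1 [← h]; exact neg_add_cancel _
    have h2 : (2:ℝ) • (∫ ω, g (Q ω) ∂P) = 0 := by rw [two_smul]; exact h1
    simpa using (smul_eq_zero.mp h2).resolve_left (by norm_num)
  -- continuity of the numerators
  have hcontN1 : Continuous N1 := by
    simp only [hN1def]; fun_prop
  have hcontN2 : Continuous N2 := by
    simp only [hN2def]; fun_prop
  -- integrals of numerator products vanish
  have key1 : (∫ ω, N1 (Q ω) * N1 (Q ω) ∂P) = 0 := by
    refine flip _ (hcontN1.mul hcontN1) fun q => ?_
    show N1 (μ1 * q) * N1 (μ1 * q) = -(N1 q * N1 q)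
    rw [hEq1, show μ1 * N1 q * (μ1 * N1 q) = μ1 * (N1 q * μ1) * N1 q by noncomm_ring,
      ← hc1, show μ1 * (μ1 * N1 q) * N1 q = (μ1 * μ1) * (N1 q * N1 q) by noncomm_ring, hsq]
    noncomm_ring
  have key2 : (∫ ω, N2 (Q ω) * N2 (Q ω) ∂P) = 0 := by
    refine flip _ (hcontN2.mul hcontN2) fun q => ?_
    show N2 (μ1 * q) * N2 (μ1 * q) = -(N2 q * N2 q)
    rw [hEq2, show μ1 * N2 q * (μ1 * N2 q) = μ1 * (N2 q * μ1) * N2 q by noncomm_ring,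
      ← hc2, show μ1 * (μ1 * N2 q) * N2 q = (μ1 * μ1) * (N2 q * N2 q) by noncomm_ring, hsq]
    noncomm_ring
  have key3 : (∫ ω, N1 (Q ω) * N2 (Q ω) ∂P) = 0 := by
    refine flip _ (hcontN1.mul hcontN2) fun q => ?_
    show N1 (μ1 * q) * N2 (μ1 * q) = -(N1 q * N2 q)
    rw [hEq1, hEq2, show μ1 * N1 q * (μ1 * N2 q) = μ1 * (N1 q * μ1) * N2 q by noncomm_ring,
      ← hc1, show μ1 * (μ1 * N1 q) * N2 q = (μ1 * μ1) * (N1 q * N2 q) by noncomm_ring, hsq]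
    noncomm_ring
  -- relate Z's to numerators via scalar multiplication
  have hhalf : ∀ x : ℍ[ℝ], x / 2 = (2⁻¹:ℝ) • x := by
    intro x
    rw [div_eq_mul_inv, show (2:ℍ[ℝ]) = ((2:ℝ):ℍ[ℝ]) by norm_cast, ← Quaternion.coe_inv]
    exact Quaternion.mul_coe_eq_smul _ _
  have hz1 : ∀ ω, Z1 ω = (2⁻¹:ℝ) • N1 (Q ω) := by
    intro ω; rw [hZ1, hhalf]
  have hz2 : ∀ ω, Z2 ω = (2⁻¹:ℝ) • N2 (Q ω) := by
    intro ω
    rw [hZ2, hhalf, show -((2⁻¹:ℝ) • (Q ω + μ1 * Q ω * μ1)) * μ2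
      = (2⁻¹:ℝ) • (-(Q ω + μ1 * Q ω * μ1) * μ2) by rw [← smul_neg, smul_mul_assoc]]
  have e1 : ∀ ω, Z1 ω ^ 2 = (2⁻¹*2⁻¹:ℝ) • (N1 (Q ω) * N1 (Q ω)) := by
    intro ω; rw [hz1, sq, smul_mul_smul_comm]
  have e2 : ∀ ω, Z2 ω ^ 2 = (2⁻¹*2⁻¹:ℝ) • (N2 (Q ω) * N2 (Q ω)) := by
    intro ω; rw [hz2, sq, smul_mul_smul_comm]
  have e3 : ∀ ω, Z1 ω * Z2 ω = (2⁻¹*2⁻¹:ℝ) • (N1 (Q ω) * N2 (Q ω)) := by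
    intro ω; rw [hz1, hz2, smul_mul_smul_comm]
  refine ⟨?_, ?_, ?_⟩
  · rw [integral_congr_ae (Filter.Eventually.of_forall e1), integral_smul, key1, smul_zero]
  · rw [integral_congr_ae (Filter.Eventually.of_forall e2), integral_smul, key2, smul_zero]
  · rw [integral_congr_ae (Filter.Eventually.of_forall e3), integral_smul, key3, smul_zero]
end

section
/- Second-order structure of a (μ1, μ1)-proper variable: let μ1, μ2 be orthogonal pure unit quaternions, and let Q be a square-integrable quaternion random variable on (Ω, P) whose law is invariant under q ↦ μ1·q·μ1 (i.e. the law of ω ↦ μ1·Q(ω)·μ1 equals the law of Q). Let Z1 := (Q − μ1·Q·μ1)/2 and Z2 := −((Q + μ1·Q·μ1)/2)·μ2 be its Cayley–Dickson components, taking values in ℂ_{μ1} = span_ℝ{1, μ1}. Then Z1 and Z2 are neither correlated nor pseudo-correlated: E[Z1·Z2] = 0 and E[Z1·star(Z2)] = 0. -/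
open Quaternion MeasureTheory

/-- Second-order structure of a `(μ1, μ1)`-proper quaternion random variable
(invariant under `q ↦ μ1·q·μ1`): its Cayley–Dickson components are neither
correlated nor pseudo-correlated: `E[Z1·Z2] = 0` and `E[Z1·star(Z2)] = 0`. -/
theorem second_order_structure_mu1_mu1_proper
    {Ω : Type*} [MeasurableSpace Ω] (P : Measure Ω) [IsProbabilityMeasure P]
    (μ1 μ2 : ℍ[ℝ]) (h1re : μ1.re = 0) (h1 : ‖μ1‖ = 1)
    (h2re : μ2.re = 0) (h2 : ‖μ2‖ = 1) (horth : (μ1 * μ2).re = 0)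
    (Q : Ω → ℍ[ℝ]) (hQmeas : Measurable Q) (hQ : MemLp Q 2 P)
    (hprop : Measure.map (fun ω => μ1 * Q ω * μ1) P = Measure.map Q P)
    (Z1 Z2 : Ω → ℍ[ℝ])
    (hZ1 : ∀ ω, Z1 ω = (Q ω - μ1 * Q ω * μ1) / 2)
    (hZ2 : ∀ ω, Z2 ω = -((Q ω + μ1 * Q ω * μ1) / 2) * μ2) :
    (∫ ω, Z1 ω * Z2 ω ∂P) = 0 ∧
    (∫ ω, Z1 ω * star (Z2 ω) ∂P) = 0 := by
  -- μ1 is a pure unit quaternion, so μ1 * μ1 = -1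
  have hstar : star μ1 = -μ1 := Quaternion.star_eq_neg.mpr h1re
  have hns : Quaternion.normSq μ1 = 1 := by
    rw [Quaternion.normSq_eq_norm_mul_self, h1]; norm_num
  have hm1sq : μ1 * μ1 = -1 := by
    have h := Quaternion.star_mul_self μ1
    rw [hstar, neg_mul, hns] at h
    have : -(μ1 * μ1) = 1 := by rw [h]; norm_num
    rw [← this]; abel
  have hinv : ∀ q : ℍ[ℝ], μ1 * (μ1 * q * μ1) * μ1 = q := by
    intro q
    rw [show μ1 * (μ1 * q * μ1) * μ1 = (μ1 * μ1) * q * (μ1 * μ1) by noncomm_ring, hm1sq]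
    simp
  -- key lemma: if F(μ1 q μ1) = -F q then E[F(Q)] = 0
  have key : ∀ F : ℍ[ℝ] → ℍ[ℝ], Continuous F → (∀ q, F (μ1 * q * μ1) = -F q) →
      (∫ ω, F (Q ω) ∂P) = 0 := by
    intro F hF hFneg
    have hTmeas : Measurable fun ω => μ1 * Q ω * μ1 :=
      (hQmeas.const_mul μ1).mul_const μ1
    have e1 : ∫ ω, F (Q ω) ∂P = ∫ q, F q ∂(Measure.map Q P) :=
      (integral_map hQmeas.aemeasurable hF.aestronglyMeasurable).symm
    have e2 : ∫ q, F q ∂(Measure.map (fun ω => μ1 * Q ω * μ1) P)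
        = ∫ ω, F (μ1 * Q ω * μ1) ∂P :=
      integral_map hTmeas.aemeasurable hF.aestronglyMeasurable
    have e3 : ∫ ω, F (μ1 * Q ω * μ1) ∂P = -∫ ω, F (Q ω) ∂P := by
      simp_rw [hFneg]; exact integral_neg _
    have h : -∫ ω, F (Q ω) ∂P = ∫ ω, F (Q ω) ∂P := by
      rw [← e3, ← e2, hprop, ← e1]
    have h2 : (2 : ℝ) • (∫ ω, F (Q ω) ∂P) = 0 := by
      rw [two_smul]; nth_rewrite 1 [← h]; simp
    simpa using (smul_eq_zero.mp h2).resolve_left (by norm_num)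
  constructor
  · have := key (fun q => ((q - μ1 * q * μ1) / 2) * (-((q + μ1 * q * μ1) / 2) * μ2))
      (by fun_prop)
      (by
        intro q
        simp only [hinv]
        rw [show μ1 * q * μ1 - q = -(q - μ1 * q * μ1) by abel,
          show μ1 * q * μ1 + q = q + μ1 * q * μ1 by abel]
        rw [neg_div, neg_mul])
    simp_rw [hZ1, hZ2]
    exact this
  · have := key (fun q => ((q - μ1 * q * μ1) / 2) * star (-((q + μ1 * q * μ1) / 2) * μ2))
      (by fun_prop)
      (by
        intro q
        simp only [hinv]
        rw [show μ1 * q * μ1 - q = -(q - μ1 * q * μ1) by abel,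
          show μ1 * q * μ1 + q = q + μ1 * q * μ1 by abel]
        rw [neg_div, neg_mul])
    simp_rw [hZ1, hZ2]
    exact this
end

section
/- Circularity implies full rotational invariance of the law: let Q be a quaternion random variable on a probability space (Ω, P) such that for all unit quaternions u, v ∈ ℍ, the law of ω ↦ u·Q(ω)·v equals the law of Q. Then the law of Q is invariant under every rotation of ℝ⁴: for every ℝ-linear bijection f : ℍ → ℍ with |f(q)| = |q| for all q and determinant 1, the law of ω ↦ f(Q(ω)) equals the law of Q. -/
set_option maxRecDepth 8000

open Quaternion MeasureTheory

noncomputable def B : Module.Basis (Fin 4) ℝ ℍ[ℝ] := QuaternionAlgebra.basisOneIJK _ _ _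

lemma B_apply : B 0 = 1 ∧ B 1 = ⟨0,1,0,0⟩ ∧ B 2 = ⟨0,0,1,0⟩ ∧ B 3 = ⟨0,0,0,1⟩ := by
  refine ⟨?_, ?_, ?_, ?_⟩ <;>
  · apply B.repr.injective
    rw [Module.Basis.repr_self]
    ext x
    fin_cases x <;> simp [Finsupp.single_apply] <;> rfl

lemma qmat (f : ℍ[ℝ] →ₗ[ℝ] ℍ[ℝ]) : LinearMap.toMatrix B B f =
    !![(f (B 0)).re, (f (B 1)).re, (f (B 2)).re, (f (B 3)).re;
       (f (B 0)).imI, (f (B 1)).imI, (f (B 2)).imI, (f (B 3)).imI;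
       (f (B 0)).imJ, (f (B 1)).imJ, (f (B 2)).imJ, (f (B 3)).imJ;
       (f (B 0)).imK, (f (B 1)).imK, (f (B 2)).imK, (f (B 3)).imK] := by
  ext x y
  rw [LinearMap.toMatrix_apply]
  fin_cases x <;> fin_cases y <;> simp [B] <;> rfl

lemma det4 (M : Matrix (Fin 4) (Fin 4) ℝ) : M.det =
    M 0 0 * (M 1 1 * (M 2 2 * M 3 3 - M 2 3 * M 3 2) - M 1 2 * (M 2 1 * M 3 3 - M 2 3 * M 3 1) + M 1 3 * (M 2 1 * M 3 2 - M 2 2 * M 3 1))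
  - M 0 1 * (M 1 0 * (M 2 2 * M 3 3 - M 2 3 * M 3 2) - M 1 2 * (M 2 0 * M 3 3 - M 2 3 * M 3 0) + M 1 3 * (M 2 0 * M 3 2 - M 2 2 * M 3 0))
  + M 0 2 * (M 1 0 * (M 2 1 * M 3 3 - M 2 3 * M 3 1) - M 1 1 * (M 2 0 * M 3 3 - M 2 3 * M 3 0) + M 1 3 * (M 2 0 * M 3 1 - M 2 1 * M 3 0))
  - M 0 3 * (M 1 0 * (M 2 1 * M 3 2 - M 2 2 * M 3 1) - M 1 1 * (M 2 0 * M 3 2 - M 2 2 * M 3 0) + M 1 2 * (M 2 0 * M 3 1 - M 2 1 * M 3 0)) := by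
  rw [Matrix.det_succ_row_zero]
  simp [Fin.sum_univ_succ, Matrix.det_fin_three, Matrix.submatrix, Fin.succAbove,
    show (Fin.succ 2 : Fin 4) = 3 from rfl, show (Fin.castSucc 2 : Fin 4) = 2 from rfl,
    show (Fin.succ 1 : Fin 4) = 2 from rfl, show (Fin.castSucc 1 : Fin 4) = 1 from rfl]
  ring


lemma unit_sq {a : ℍ[ℝ]} (ha : ‖a‖ = 1) :
    a.re^2 + a.imI^2 + a.imJ^2 + a.imK^2 = 1 := by
  have h : normSq a = 1 := by
    have := Quaternion.normSq_eq_norm_mul_self (a := a)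
    rw [ha] at this; simpa using this
  rw [Quaternion.normSq_def'] at h; linarith

lemma detL {a : ℍ[ℝ]} (ha : ‖a‖ = 1) : LinearMap.det (LinearMap.mulLeft ℝ a) = 1 := by
  have h := unit_sq ha
  rw [← LinearMap.det_toMatrix B, qmat, det4]
  obtain ⟨h0, h1, h2, h3⟩ := B_apply
  simp [Quaternion.ext_iff, mul_one]
  simp [h0, h1, h2, h3]
  nlinarith [h]

lemma detR {a : ℍ[ℝ]} (ha : ‖a‖ = 1) : LinearMap.det (LinearMap.mulRight ℝ a) = 1 := by
  have h := unit_sq ha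
  rw [← LinearMap.det_toMatrix B, qmat, det4]
  obtain ⟨h0, h1, h2, h3⟩ := B_apply
  simp [Quaternion.ext_iff, mul_one]
  simp [h0, h1, h2, h3]
  nlinarith [h]

def qI : ℍ[ℝ] := ⟨0,1,0,0⟩
def qJ : ℍ[ℝ] := ⟨0,0,1,0⟩
def qK : ℍ[ℝ] := ⟨0,0,0,1⟩

@[simp] lemma qI_re : qI.re = 0 := rfl
@[simp] lemma qI_imI : qI.imI = 1 := rfl
@[simp] lemma qI_imJ : qI.imJ = 0 := rfl
@[simp] lemma qI_imK : qI.imK = 0 := rfl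
@[simp] lemma qJ_re : qJ.re = 0 := rfl
@[simp] lemma qJ_imI : qJ.imI = 0 := rfl
@[simp] lemma qJ_imJ : qJ.imJ = 1 := rfl
@[simp] lemma qJ_imK : qJ.imK = 0 := rfl
@[simp] lemma qK_re : qK.re = 0 := rfl
@[simp] lemma qK_imI : qK.imI = 0 := rfl
@[simp] lemma qK_imJ : qK.imJ = 0 := rfl
@[simp] lemma qK_imK : qK.imK = 1 := rfl

lemma sq_unit {a : ℍ[ℝ]} (ha : a.re^2 + a.imI^2 + a.imJ^2 + a.imK^2 = 1) :
    ‖a‖ = 1 := by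
  have h : normSq a = 1 := by rw [Quaternion.normSq_def']; linarith
  have h2 := Quaternion.normSq_eq_norm_mul_self (a := a)
  nlinarith [norm_nonneg a]

lemma inner_coords (x y : ℍ[ℝ]) : (inner ℝ x y : ℝ) =
    x.re*y.re + x.imI*y.imI + x.imJ*y.imJ + x.imK*y.imK := by
  rw [Quaternion.inner_def]
  simp [Quaternion.re_mul]

lemma conj_i {b : ℍ[ℝ]} (hb : b.re = 0) (hb1 : ‖b‖ = 1) :
    ∃ w : ℍ[ℝ], ‖w‖ = 1 ∧ w * qI * star w = b := by
  have hsq := unit_sq hb1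
  rw [hb] at hsq
  by_cases hcase : b = -qI
  · refine ⟨qJ, sq_unit (by norm_num), ?_⟩
    rw [hcase]
    ext <;> simp [Quaternion.re_mul, Quaternion.imI_mul, Quaternion.imJ_mul, Quaternion.imK_mul]
  · have hd : b.imI ≠ -1 := by
      intro hd
      apply hcase
      have h2 : b.imJ = 0 := by nlinarith [sq_nonneg b.imJ, sq_nonneg b.imK]
      have h3 : b.imK = 0 := by nlinarith [sq_nonneg b.imJ, sq_nonneg b.imK]
      ext <;> simp [hb, hd, h2, h3]
    have hle : b.imI^2 ≤ 1 := by nlinarith [sq_nonneg b.imJ, sq_nonneg b.imK]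
    have hd' : 1 + b.imI > 0 := by
      rcases lt_or_eq_of_le (by nlinarith : -1 ≤ b.imI) with h | h
      · linarith
      · exact absurd h.symm hd
    set c : ℍ[ℝ] := qI + b with hc
    have hcnorm : ‖c‖ * ‖c‖ = 2 + 2 * b.imI := by
      rw [← Quaternion.normSq_eq_norm_mul_self, Quaternion.normSq_def']
      simp [hc, hb]
      ring_nf
      linarith
    have hcpos : ‖c‖ > 0 := by nlinarith [norm_nonneg c]
    refine ⟨‖c‖⁻¹ • c, ?_, ?_⟩
    · rw [norm_smul]; simp [hcpos.ne']
    · have key : c * qI * star c = (2 + 2 * b.imI) • b := by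
        ext <;>
          simp [hc, hb, Quaternion.re_mul, Quaternion.imI_mul, Quaternion.imJ_mul,
            Quaternion.imK_mul] <;> nlinarith [hsq]
      rw [Quaternion.star_smul, smul_mul_assoc, mul_smul_comm, smul_mul_assoc, key,
        smul_smul, smul_smul]
      rw [show ‖c‖⁻¹ * ‖c‖⁻¹ * (2 + 2*b.imI) = (‖c‖*‖c‖)⁻¹ * (2+2*b.imI) by ring, hcnorm,
        inv_mul_cancel₀ (by linarith), one_smul]

lemma conj_jk {y z : ℝ} (hyz : y^2 + z^2 = 1) :
    ∃ w : ℍ[ℝ], ‖w‖ = 1 ∧ w * qI * star w = qI ∧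
      w * qJ * star w = (⟨0,0,y,z⟩ : ℍ[ℝ]) ∧ w * qK * star w = (⟨0,0,-z,y⟩ : ℍ[ℝ]) := by
  have main : ∀ α β : ℝ, α^2 + β^2 = 1 → α^2 - β^2 = y → 2*α*β = z →
      ∃ w : ℍ[ℝ], ‖w‖ = 1 ∧ w * qI * star w = qI ∧
      w * qJ * star w = (⟨0,0,y,z⟩ : ℍ[ℝ]) ∧ w * qK * star w = (⟨0,0,-z,y⟩ : ℍ[ℝ]) := by
    intro α β h1 h2 h3
    obtain ⟨w, hw0, hw1, hw2, hw3⟩ : ∃ w : ℍ[ℝ], w.re = α ∧ w.imI = β ∧ w.imJ = 0 ∧ w.imK = 0 :=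
      ⟨⟨α,β,0,0⟩, rfl, rfl, rfl, rfl⟩
    refine ⟨w, sq_unit (by simpa [hw0, hw1, hw2, hw3] using h1), ?_, ?_, ?_⟩ <;>
      ext <;>
        simp [Quaternion.re_mul, Quaternion.imI_mul, Quaternion.imJ_mul, Quaternion.imK_mul, hw0, hw1, hw2, hw3] <;>
        linarith [h1, h2, h3]
  by_cases hy : y = -1
  · have hz : z = 0 := by nlinarith
    exact main 0 1 (by norm_num) (by rw [hy]; ring) (by rw [hz]; ring)
  · have hyge : 1 + y > 0 := by
      rcases lt_or_eq_of_le (by nlinarith : -1 ≤ y) with h | h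
      · linarith
      · exact absurd h.symm hy
    set α := Real.sqrt ((1+y)/2) with hα
    have hα2 : α^2 = (1+y)/2 := Real.sq_sqrt (by linarith)
    have hαpos : α > 0 := Real.sqrt_pos.2 (by linarith)
    set β := z / (2*α) with hβ
    have hβ2 : β^2 = (1-y)/2 := by
      rw [hβ, div_pow]
      have : (2*α)^2 = 2*(1+y) := by rw [mul_pow, hα2]; ring
      rw [this]
      have hz2 : z^2 = (1-y)*(1+y) := by nlinarith
      rw [hz2]
      field_simp
    exact main α β (by rw [hα2, hβ2]; ring) (by rw [hα2, hβ2]; ring)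
      (by rw [hβ]; field_simp)

lemma det_explicit (f : ℍ[ℝ] →ₗ[ℝ] ℍ[ℝ]) : LinearMap.det f =
    (f 1).re * ((f qI).imI * ((f qJ).imJ * (f qK).imK - (f qJ).imK * (f qK).imJ) - (f qJ).imI * ((f qI).imJ * (f qK).imK - (f qI).imK * (f qK).imJ) + (f qK).imI * ((f qI).imJ * (f qJ).imK - (f qI).imK * (f qJ).imJ))
  - (f qI).re * ((f 1).imI * ((f qJ).imJ * (f qK).imK - (f qJ).imK * (f qK).imJ) - (f qJ).imI * ((f 1).imJ * (f qK).imK - (f 1).imK * (f qK).imJ) + (f qK).imI * ((f 1).imJ * (f qJ).imK - (f 1).imK * (f qJ).imJ))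
  + (f qJ).re * ((f 1).imI * ((f qI).imJ * (f qK).imK - (f qI).imK * (f qK).imJ) - (f qI).imI * ((f 1).imJ * (f qK).imK - (f 1).imK * (f qK).imJ) + (f qK).imI * ((f 1).imJ * (f qI).imK - (f 1).imK * (f qI).imJ))
  - (f qK).re * ((f 1).imI * ((f qI).imJ * (f qJ).imK - (f qI).imK * (f qJ).imJ) - (f qI).imI * ((f 1).imJ * (f qJ).imK - (f 1).imK * (f qJ).imJ) + (f qJ).imI * ((f 1).imJ * (f qI).imK - (f 1).imK * (f qI).imJ)) := by
  obtain ⟨B0, B1, B2, B3⟩ := B_apply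
  rw [← LinearMap.det_toMatrix B, qmat, det4, B0, B1, B2, B3,
    show (⟨0,1,0,0⟩ : ℍ[ℝ]) = qI from rfl, show (⟨0,0,1,0⟩ : ℍ[ℝ]) = qJ from rfl,
    show (⟨0,0,0,1⟩ : ℍ[ℝ]) = qK from rfl]
  simp [Matrix.cons_val_zero, Matrix.cons_val_one]
  ring

lemma inn1 (x : ℍ[ℝ]) : (inner ℝ x (1:ℍ[ℝ]) : ℝ) = x.re := by
  rw [inner_coords]; simp
lemma innI (x : ℍ[ℝ]) : (inner ℝ x qI : ℝ) = x.imI := by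
  rw [inner_coords]; simp
lemma normqI : ‖qI‖ = 1 := sq_unit (by norm_num)
lemma normqJ : ‖qJ‖ = 1 := sq_unit (by norm_num)
lemma normqK : ‖qK‖ = 1 := sq_unit (by norm_num)

lemma unit_normSq {a : ℍ[ℝ]} (ha : ‖a‖ = 1) : normSq a = 1 := by
  have := Quaternion.normSq_eq_norm_mul_self (a := a); rw [ha] at this; simpa using this

lemma unit_star_mul {a : ℍ[ℝ]} (ha : ‖a‖ = 1) : star a * a = 1 := by
  rw [Quaternion.star_mul_self, unit_normSq ha]; simp

lemma unit_mul_star {a : ℍ[ℝ]} (ha : ‖a‖ = 1) : a * star a = 1 := by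
  rw [Quaternion.self_mul_star, unit_normSq ha]; simp

lemma key (f : ℍ[ℝ] →ₗ[ℝ] ℍ[ℝ]) (hiso : ∀ q, ‖f q‖ = ‖q‖)
    (hdet : LinearMap.det f = 1) :
    ∃ u v : ℍ[ℝ], ‖u‖ = 1 ∧ ‖v‖ = 1 ∧ ∀ q, f q = u * q * v := by
  obtain ⟨B0, B1, B2, B3⟩ := B_apply
  set a : ℍ[ℝ] := f 1 with haf
  have ha : ‖a‖ = 1 := by rw [haf, hiso]; simp
  set g : ℍ[ℝ] →ₗ[ℝ] ℍ[ℝ] := (LinearMap.mulLeft ℝ (star a)).comp f with hg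
  have giso : ∀ q, ‖g q‖ = ‖q‖ := by
    intro q
    simp only [hg, LinearMap.comp_apply, LinearMap.mulLeft_apply]
    rw [norm_mul, norm_star, ha, one_mul, hiso]
  have ginner : ∀ x y : ℍ[ℝ], (inner ℝ (g x) (g y) : ℝ) = inner ℝ x y := fun x y =>
    LinearIsometry.inner_map_map ⟨g, giso⟩ x y
  have g1 : g 1 = 1 := by
    simp only [hg, LinearMap.comp_apply, LinearMap.mulLeft_apply, ← haf]
    exact unit_star_mul ha
  set b : ℍ[ℝ] := g qI with hbg
  have hbre : b.re = 0 := by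
    have := ginner qI 1
    rw [g1, inn1, inn1, ← hbg] at this
    simpa using this
  have hbnorm : ‖b‖ = 1 := by rw [hbg, giso, normqI]
  obtain ⟨w₁, hw₁, hw₁conj⟩ := conj_i hbre hbnorm
  set h : ℍ[ℝ] →ₗ[ℝ] ℍ[ℝ] :=
    (LinearMap.mulRight ℝ w₁).comp ((LinearMap.mulLeft ℝ (star w₁)).comp g) with hh
  have happly : ∀ q, h q = star w₁ * g q * w₁ := by
    intro q
    simp [hh, LinearMap.comp_apply, LinearMap.mulLeft_apply, LinearMap.mulRight_apply]
  have hiso' : ∀ q, ‖h q‖ = ‖q‖ := by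
    intro q
    rw [happly, norm_mul, norm_mul, norm_star, hw₁, giso, one_mul, mul_one]
  have hinner : ∀ x y : ℍ[ℝ], (inner ℝ (h x) (h y) : ℝ) = inner ℝ x y := fun x y =>
    LinearIsometry.inner_map_map ⟨h, hiso'⟩ x y
  have hcanw₁ : ∀ x : ℍ[ℝ], w₁ * (star w₁ * x) = x := fun x => by
    rw [← mul_assoc, unit_mul_star hw₁, one_mul]
  have hcanw₁' : ∀ x : ℍ[ℝ], star w₁ * (w₁ * x) = x := fun x => by
    rw [← mul_assoc, unit_star_mul hw₁, one_mul]
  have h1 : h 1 = 1 := by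
    rw [happly, g1, mul_one, unit_star_mul hw₁]
  have hi : h qI = qI := by
    rw [happly, ← hbg, ← hw₁conj]
    simp only [mul_assoc, hcanw₁']
    rw [unit_star_mul hw₁, mul_one]
  set y := (h qJ).imJ with hy
  set z := (h qJ).imK with hz
  have hhj : h qJ = (⟨0,0,y,z⟩ : ℍ[ℝ]) := by
    have e1 : (h qJ).re = 0 := by
      have := hinner qJ 1; rw [h1, inn1, inn1] at this; simpa using this
    have e2 : (h qJ).imI = 0 := by
      have := hinner qJ qI; rw [hi, innI, innI] at this; simpa using this
    ext <;> simp [e1, e2, hy, hz]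
  have hyz : y^2 + z^2 = 1 := by
    have := unit_sq (by rw [hiso' qJ, normqJ] : ‖h qJ‖ = 1)
    rw [hhj] at this; simpa using this
  set s := (h qK).imJ with hs
  set t := (h qK).imK with ht
  have hhk : h qK = (⟨0,0,s,t⟩ : ℍ[ℝ]) := by
    have e1 : (h qK).re = 0 := by
      have := hinner qK 1; rw [h1, inn1, inn1] at this; simpa using this
    have e2 : (h qK).imI = 0 := by
      have := hinner qK qI; rw [hi, innI, innI] at this; simpa using this
    ext <;> simp [e1, e2, hs, ht]
  have horth : y*s + z*t = 0 := by
    have := hinner qJ qK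
    rw [inner_coords, inner_coords, hhj, hhk] at this
    simpa using this
  have hdeth : LinearMap.det h = 1 := by
    rw [hh, LinearMap.det_comp, LinearMap.det_comp, hg, LinearMap.det_comp]
    rw [detR hw₁, detL (by rw [Quaternion.norm_star]; exact hw₁), detL (by rw [Quaternion.norm_star]; exact ha), hdet]
    ring
  have hdet4 : y * t - z * s = 1 := by
    rw [det_explicit, h1, hi, hhj, hhk] at hdeth
    simp at hdeth
    linarith
  have hseq : s = -z := by linear_combination -s*hyz + y*horth - z*hdet4
  have hteq : t = y := by linear_combination -t*hyz + z*horth + y*hdet4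
  obtain ⟨w₂, hw₂, hw₂i, hw₂j, hw₂k⟩ := conj_jk hyz
  have hcanw₂ : ∀ x : ℍ[ℝ], w₂ * (star w₂ * x) = x := fun x => by
    rw [← mul_assoc, unit_mul_star hw₂, one_mul]
  have hcana : ∀ x : ℍ[ℝ], a * (star a * x) = x := fun x => by
    rw [← mul_assoc, unit_mul_star ha, one_mul]
  set c : ℍ[ℝ] →ₗ[ℝ] ℍ[ℝ] :=
    (LinearMap.mulRight ℝ (star w₂)).comp (LinearMap.mulLeft ℝ w₂) with hc
  have capply : ∀ q, c q = w₂ * q * star w₂ := fun q => by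
    simp [hc, LinearMap.comp_apply, LinearMap.mulLeft_apply, LinearMap.mulRight_apply]
  have heq : h = c := by
    apply B.ext
    intro i
    have hidx1 : ((fun (i : Fin 4) => i) (⟨1, by norm_num⟩ : Fin 4)) = (1 : Fin 4) := rfl
    have hidx2 : ((fun (i : Fin 4) => i) (⟨2, by norm_num⟩ : Fin 4)) = (2 : Fin 4) := rfl
    have hidx3 : ((fun (i : Fin 4) => i) (⟨3, by norm_num⟩ : Fin 4)) = (3 : Fin 4) := rfl
    fin_cases i
    · show h (B 0) = c (B 0)
      rw [B0, capply, h1, mul_one, unit_mul_star hw₂]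
    · rw [hidx1, B1, show (⟨0,1,0,0⟩ : ℍ[ℝ]) = qI from rfl, capply, hi, hw₂i]
    · rw [hidx2, B2, show (⟨0,0,1,0⟩ : ℍ[ℝ]) = qJ from rfl, capply, hhj, hw₂j]
    · rw [hidx3, B3, show (⟨0,0,0,1⟩ : ℍ[ℝ]) = qK from rfl, capply, hhk, hw₂k, hseq, hteq]
  refine ⟨a * w₁ * w₂, star w₂ * star w₁, ?_, ?_, ?_⟩
  · rw [norm_mul, norm_mul, ha, hw₁, hw₂]; ring
  · rw [norm_mul, norm_star, norm_star, hw₁, hw₂]; ring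
  · intro q
    have hq : star w₁ * g q * w₁ = w₂ * q * star w₂ := by
      rw [← happly, ← capply, heq]
    have e1 : g q = w₁ * (w₂ * q * star w₂) * star w₁ := by
      rw [← hq]
      simp only [mul_assoc, hcanw₁]
      rw [unit_mul_star hw₁, mul_one]
    have e2 : f q = a * (w₁ * (w₂ * q * star w₂) * star w₁) := by
      rw [← e1, hg]
      simp only [LinearMap.comp_apply, LinearMap.mulLeft_apply, hcana]
    rw [e2]
    simp only [mul_assoc]


/-- Circularity implies full rotational invariance of the law: if the law of `Q` is
invariant under `q ↦ u·q·v` for all unit quaternions `u, v`, then it is invariant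
under every rotation of `ℝ⁴ ≅ ℍ`, i.e. every ℝ-linear bijective isometry of
determinant `1`. -/
theorem circular_law_is_SO4_invariant
    {Ω : Type*} [MeasurableSpace Ω] (P : Measure Ω) [IsProbabilityMeasure P]
    (Q : Ω → ℍ[ℝ]) (hQmeas : Measurable Q)
    (hcirc : ∀ u v : ℍ[ℝ], ‖u‖ = 1 → ‖v‖ = 1 →
      Measure.map (fun ω => u * Q ω * v) P = Measure.map Q P) :
    ∀ f : ℍ[ℝ] →ₗ[ℝ] ℍ[ℝ], Function.Bijective f → (∀ q : ℍ[ℝ], ‖f q‖ = ‖q‖) →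
      LinearMap.det f = 1 →
      Measure.map (fun ω => f (Q ω)) P = Measure.map Q P := by
  intro f _ hiso hdet
  obtain ⟨u, v, hu, hv, hpt⟩ := key f hiso hdet
  have : (fun ω => f (Q ω)) = fun ω => u * Q ω * v := funext fun ω => hpt (Q ω)
  rw [this]
  exact hcirc u v hu hv
end
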